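/- Let G ∈ 𝒦_{n,d} with n ≥ 3 and d ≥ 1, and suppose G ∉ 𝒦̃_{n,d}. Then there exists a stretched index i and ℓ ∈ {1,2} such that the graph G − {i₀, i_{3−ℓ}} obtained by deleting the hub vertex i₀ and the wing vertex i_{3−ℓ} belongs to 𝒦_{n,d−1}, with the remaining wing vertex i_ℓ playing the role of an unstretched vertex (i.e., i_ℓ is adjacent, for every j ≠ i, to some vertex associated with j, and the induced structure on the remaining vertices matches the definition of a d−1-fold 2-stretching of K_n). -/

import Mathlib

open SimpleGraph

/-- Vertices of a stretched clique obtained from `K_n` by 2-stretching the vertices in `D`: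
`Sum.inl j` is the unstretched vertex `j ∉ D`, `Sum.inr (Sum.inl i)` is the hub vertex `i₀`
of a stretched index `i ∈ D`, and `Sum.inr (Sum.inr (i, ℓ))` is the wing vertex `i_{ℓ+1}`. -/
abbrev KVert (n : ℕ) (D : Finset (Fin n)) :=
  {j : Fin n // j ∉ D} ⊕ ({i : Fin n // i ∈ D} ⊕ ({i : Fin n // i ∈ D} × Fin 2))

/-- Adjacency data of a stretched clique: unstretched vertices are pairwise adjacent,
each hub is adjacent exactly to its two wings, `W i ℓ j` records an edge between wing `i_{ℓ+1}`
and unstretched vertex `j`, and `X i ℓ i' ℓ'` records an edge between wings of distinct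
stretched indices. -/
def KRel (n : ℕ) (D : Finset (Fin n))
    (W : {i : Fin n // i ∈ D} → Fin 2 → {j : Fin n // j ∉ D} → Prop)
    (X : {i : Fin n // i ∈ D} → Fin 2 → {i : Fin n // i ∈ D} → Fin 2 → Prop) :
    KVert n D → KVert n D → Prop
  | Sum.inl _, Sum.inl _ => True
  | Sum.inr (Sum.inl i), Sum.inr (Sum.inr (i', _)) => i = i'
  | Sum.inr (Sum.inr (i, l)), Sum.inl j => W i l j
  | Sum.inr (Sum.inr (i, l)), Sum.inr (Sum.inr (i', l')) => i ≠ i' ∧ X i l i' l'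
  | _, _ => False

/-- The stretched clique determined by the data `D, W, X`. -/
def KGraph (n : ℕ) (D : Finset (Fin n))
    (W : {i : Fin n // i ∈ D} → Fin 2 → {j : Fin n // j ∉ D} → Prop)
    (X : {i : Fin n // i ∈ D} → Fin 2 → {i : Fin n // i ∈ D} → Fin 2 → Prop) :
    SimpleGraph (KVert n D) :=
  SimpleGraph.fromRel (KRel n D W X)

/-- The covering conditions coming from `A₁ ∪ A₂ = Γ(v)` in each 2-stretching:
every unstretched vertex is adjacent to some wing of every stretched index, and between
the wings of any two distinct stretched indices there is at least one edge. -/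
def KCover (n : ℕ) (D : Finset (Fin n))
    (W : {i : Fin n // i ∈ D} → Fin 2 → {j : Fin n // j ∉ D} → Prop)
    (X : {i : Fin n // i ∈ D} → Fin 2 → {i : Fin n // i ∈ D} → Fin 2 → Prop) : Prop :=
  (∀ i j, W i 0 j ∨ W i 1 j) ∧
  (∀ i i', i ≠ i' → ∃ l l', X i l i' l' ∨ X i' l' i l)

/-- Membership in the class `𝒦_{n,d}`: a graph obtained from `K_n` by
2-stretching `d` of its `n` vertices, up to isomorphism. -/
def InK (n d : ℕ) {V : Type*} (G : SimpleGraph V) : Prop :=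
  ∃ (D : Finset (Fin n))
    (W : {i : Fin n // i ∈ D} → Fin 2 → {j : Fin n // j ∉ D} → Prop)
    (X : {i : Fin n // i ∈ D} → Fin 2 → {i : Fin n // i ∈ D} → Fin 2 → Prop),
      D.card = d ∧ KCover n D W X ∧ Nonempty (G ≃g KGraph n D W X)


namespace StretchAux

lemma fin2_ne_sub : ∀ l : Fin 2, l ≠ 1 - l := by decide

lemma fin2_eq_of_ne : ∀ l m : Fin 2, m ≠ 1 - l → m = l := by decide

variable {n : ℕ} {D : Finset (Fin n)}

def liftD (i : {i : Fin n // i ∈ D}) (a : {x : Fin n // x ∈ D.erase i.1}) :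
    {x : Fin n // x ∈ D} :=
  ⟨a.1, Finset.mem_of_mem_erase a.2⟩

lemma liftD_ne (i : {i : Fin n // i ∈ D}) (a : {x : Fin n // x ∈ D.erase i.1}) :
    liftD i a ≠ i := fun h => (Finset.mem_erase.1 a.2).1 (congrArg Subtype.val h)

def Sset (i : {i : Fin n // i ∈ D}) (l : Fin 2) : Set (KVert n D) :=
  {v | v ≠ Sum.inr (Sum.inl i) ∧ v ≠ Sum.inr (Sum.inr (i, 1 - l))}

def fwd (i : {i : Fin n // i ∈ D}) (l : Fin 2) : Sset i l → KVert n (D.erase i.1) := fun v =>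
  match v with
  | ⟨Sum.inl j, _⟩ => Sum.inl ⟨j.1, fun h => j.2 (Finset.mem_of_mem_erase h)⟩
  | ⟨Sum.inr (Sum.inl a), h⟩ =>
      Sum.inr (Sum.inl ⟨a.1, Finset.mem_erase.2
        ⟨fun he => h.1 (by rw [show a = i from Subtype.ext he]), a.2⟩⟩)
  | ⟨Sum.inr (Sum.inr (a, m)), h⟩ =>
      if ha : a.1 = i.1 then Sum.inl ⟨i.1, fun hm => (Finset.mem_erase.1 hm).1 rfl⟩
      else Sum.inr (Sum.inr (⟨a.1, Finset.mem_erase.2 ⟨ha, a.2⟩⟩, m))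

def bwd (i : {i : Fin n // i ∈ D}) (l : Fin 2) : KVert n (D.erase i.1) → Sset i l := fun v =>
  match v with
  | Sum.inl j =>
      if hj : j.1 = i.1 then
        ⟨Sum.inr (Sum.inr (i, l)), by
          constructor
          · simp
          · intro h
            rw [Sum.inr.injEq, Sum.inr.injEq, Prod.mk.injEq] at h
            exact fin2_ne_sub l h.2⟩
      else
        ⟨Sum.inl ⟨j.1, fun h => j.2 (Finset.mem_erase.2 ⟨hj, h⟩)⟩, by
          constructor <;> simp⟩
  | Sum.inr (Sum.inl a) =>
      ⟨Sum.inr (Sum.inl (liftD i a)), by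
        constructor
        · intro h
          rw [Sum.inr.injEq, Sum.inl.injEq] at h
          exact liftD_ne i a h
        · simp⟩
  | Sum.inr (Sum.inr (a, m)) =>
      ⟨Sum.inr (Sum.inr (liftD i a, m)), by
        constructor
        · simp
        · intro h
          rw [Sum.inr.injEq, Sum.inr.injEq, Prod.mk.injEq] at h
          exact liftD_ne i a h.1⟩

lemma left_inv (i : {i : Fin n // i ∈ D}) (l : Fin 2) (v : Sset i l) :
    bwd i l (fwd i l v) = v := by
  obtain ⟨v, hv⟩ := v
  rcases v with j | a | ⟨a, m⟩
  · have hji : j.1 ≠ i.1 := fun h => j.2 (h ▸ i.2)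
    simp [fwd, bwd, hji]
  · rfl
  · by_cases ha : a.1 = i.1
    · have hai : a = i := Subtype.ext ha
      subst hai
      have hm : m = l := fin2_eq_of_ne l m (fun h => hv.2 (by rw [h]))
      subst hm
      simp [fwd, bwd]
    · simp [fwd, bwd, ha, liftD]

lemma right_inv (i : {i : Fin n // i ∈ D}) (l : Fin 2) (v : KVert n (D.erase i.1)) :
    fwd i l (bwd i l v) = v := by
  rcases v with j | a | ⟨a, m⟩
  · by_cases hj : j.1 = i.1
    · simp only [bwd, hj, dif_pos, fwd, dif_pos rfl, Sum.inl.injEq]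
      exact Subtype.ext hj.symm
    · simp [fwd, bwd, hj]
  · rfl
  · have ha : a.1 ≠ i.1 := (Finset.mem_erase.1 a.2).1
    simp [fwd, bwd, liftD, ha]

def stretchEquiv (i : {i : Fin n // i ∈ D}) (l : Fin 2) : Sset i l ≃ KVert n (D.erase i.1) :=
  ⟨fwd i l, bwd i l, left_inv i l, right_inv i l⟩

variable (W : {i : Fin n // i ∈ D} → Fin 2 → {j : Fin n // j ∉ D} → Prop)
variable (X : {i : Fin n // i ∈ D} → Fin 2 → {i : Fin n // i ∈ D} → Fin 2 → Prop)

def W2 (i : {i : Fin n // i ∈ D}) (l : Fin 2) :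
    {x : Fin n // x ∈ D.erase i.1} → Fin 2 → {j : Fin n // j ∉ D.erase i.1} → Prop :=
  fun a m j =>
    if j.1 = i.1 then (X (liftD i a) m i l ∨ X i l (liftD i a) m)
    else ∃ hj : j.1 ∉ D, W (liftD i a) m ⟨j.1, hj⟩

def X2 (i : {i : Fin n // i ∈ D}) :
    {x : Fin n // x ∈ D.erase i.1} → Fin 2 → {x : Fin n // x ∈ D.erase i.1} → Fin 2 → Prop :=
  fun a m b m' => X (liftD i a) m (liftD i b) m'

lemma fwd_adj (i : {i : Fin n // i ∈ D}) (l : Fin 2) (hW : ∀ j, W i l j)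
    (v w : Sset i l) :
    (KGraph n (D.erase i.1) (W2 W X i l) (X2 X i)).Adj (fwd i l v) (fwd i l w) ↔
    ((KGraph n D W X).induce (Sset i l)).Adj v w := by
  obtain ⟨v, hv⟩ := v
  obtain ⟨w, hw⟩ := w
  simp only [KGraph, fromRel_adj, SimpleGraph.comap_adj, Function.Embedding.coe_subtype]
  rcases v with j | a | ⟨a, m⟩ <;> rcases w with j' | a' | ⟨a', m'⟩
  · -- inl / inl
    simp [fwd, KRel, Subtype.ext_iff]
  · -- inl / hub
    simp [fwd, KRel]
  · -- inl / wing
    have hji : (j : Fin n) ≠ i.1 := fun h => j.2 (h ▸ i.2)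
    by_cases ha : a'.1 = i.1
    · have ha2 : a' = i := Subtype.ext ha
      subst ha2
      have hm : m' = l := fin2_eq_of_ne l m' (fun h => hw.2 (by rw [h]))
      subst hm
      simp [fwd, KRel, hW j, Subtype.ext_iff, hji, Ne.symm hji]
    · simp [fwd, ha, KRel, W2, liftD, hji, j.2, Subtype.coe_eta]
  · -- hub / inl
    simp [fwd, KRel]
  · -- hub / hub
    simp [fwd, KRel]
  · -- hub / wing
    have hai : a ≠ i := fun h => hv.1 (by rw [h])
    by_cases ha : a'.1 = i.1
    · have ha2 : a' = i := Subtype.ext ha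
      subst ha2
      have hm : m' = l := fin2_eq_of_ne l m' (fun h => hw.2 (by rw [h]))
      subst hm
      simp [fwd, KRel, hai]
    · simp [fwd, ha, KRel, Subtype.ext_iff, -SetLike.coe_eq_coe]
  · -- wing / inl
    have hji : (j' : Fin n) ≠ i.1 := fun h => j'.2 (h ▸ i.2)
    by_cases ha : a.1 = i.1
    · have ha2 : a = i := Subtype.ext ha
      subst ha2
      have hm : m = l := fin2_eq_of_ne l m (fun h => hv.2 (by rw [h]))
      subst hm
      simp [fwd, KRel, hW j', Subtype.ext_iff, hji, Ne.symm hji]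
    · simp [fwd, ha, KRel, W2, liftD, hji, j'.2, Subtype.coe_eta]
  · -- wing / hub
    have hai : a' ≠ i := fun h => hw.1 (by rw [h])
    by_cases ha : a.1 = i.1
    · have ha2 : a = i := Subtype.ext ha
      subst ha2
      have hm : m = l := fin2_eq_of_ne l m (fun h => hv.2 (by rw [h]))
      subst hm
      simp [fwd, KRel, hai]
    · simp [fwd, ha, KRel, Subtype.ext_iff, -SetLike.coe_eq_coe]
  · -- wing / wing
    by_cases ha : a.1 = i.1 <;> by_cases ha' : a'.1 = i.1
    · have h1 : a = i := Subtype.ext ha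
      have h2 : a' = i := Subtype.ext ha'
      subst h1; subst h2
      have hm : m = l := fin2_eq_of_ne l m (fun h => hv.2 (by rw [h]))
      have hm2 : m' = l := fin2_eq_of_ne l m' (fun h => hw.2 (by rw [h]))
      subst hm; subst hm2
      simp [fwd, KRel]
    · have hai : a' ≠ i := fun h => ha' (congrArg Subtype.val h)
      have hm : m = l := fin2_eq_of_ne l m (fun h => hv.2 (by rw [Subtype.ext ha, h]))
      have h1 : a = i := Subtype.ext ha
      subst hm; subst h1
      simp only [fwd, dif_pos rfl, dif_neg ha', KGraph, fromRel_adj, KRel, W2, X2, liftD,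
        Subtype.coe_eta, if_pos rfl, ne_eq, Sum.inr.injEq, Sum.inl.injEq, Prod.mk.injEq,
        reduceCtorEq, not_false_eq_true, true_and]
      simp [hai, Ne.symm hai]
      tauto
    · have hai : a ≠ i := fun h => ha (congrArg Subtype.val h)
      have hm : m' = l := fin2_eq_of_ne l m' (fun h => hw.2 (by rw [Subtype.ext ha', h]))
      have h1 : a' = i := Subtype.ext ha'
      subst hm; subst h1
      simp only [fwd, dif_pos rfl, dif_neg ha, KGraph, fromRel_adj, KRel, W2, X2, liftD,
        Subtype.coe_eta, if_pos rfl, ne_eq, Sum.inr.injEq, Sum.inl.injEq, Prod.mk.injEq,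
        reduceCtorEq, not_false_eq_true, true_and]
      simp [hai, Ne.symm hai]
    · simp [fwd, ha, ha', KRel, X2, liftD, Subtype.coe_eta, Subtype.ext_iff, Prod.ext_iff, -SetLike.coe_eq_coe]

end StretchAux

/-- If `G ∈ 𝒦_{n,d}` (with `d ≥ 1`) is not in `𝒦̃_{n,d}`, i.e. some wing vertex `i_ℓ`
satisfies `Γ̃_G(i_ℓ) = [n] \ {i}`, then there is a stretched index `i` and `ℓ ∈ {1,2}` such
that deleting the hub `i₀` and the other wing `i_{3-ℓ}` yields a graph in `𝒦_{n,d-1}`. -/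


theorem notTilde_delete_mem (n : ℕ) (hn : 3 ≤ n) (D : Finset (Fin n))
    (W : {i : Fin n // i ∈ D} → Fin 2 → {j : Fin n // j ∉ D} → Prop)
    (X : {i : Fin n // i ∈ D} → Fin 2 → {i : Fin n // i ∈ D} → Fin 2 → Prop)
    (hd : 1 ≤ D.card) (hcov : KCover n D W X)
    (hnotTilde : ∃ (i : {i : Fin n // i ∈ D}) (l : Fin 2),
      (∀ j, W i l j) ∧ ∀ i', i' ≠ i → ∃ l', X i l i' l' ∨ X i' l' i l) :
    ∃ (i : {i : Fin n // i ∈ D}) (l : Fin 2),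
      ((∀ j, W i l j) ∧ ∀ i', i' ≠ i → ∃ l', X i l i' l' ∨ X i' l' i l) ∧
      InK n (D.card - 1)
        (SimpleGraph.induce
          {v : KVert n D | v ≠ Sum.inr (Sum.inl i) ∧ v ≠ Sum.inr (Sum.inr (i, 1 - l))}
          (KGraph n D W X)) := by
  obtain ⟨i, l, h1, h2⟩ := hnotTilde
  refine ⟨i, l, ⟨h1, h2⟩, ?_⟩
  refine ⟨D.erase i.1, StretchAux.W2 W X i l, StretchAux.X2 X i, ?_, ⟨?_, ?_⟩, ?_⟩
  · rw [Finset.card_erase_of_mem i.2]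
  · intro a j
    by_cases hj : j.1 = i.1
    · obtain ⟨l', hl'⟩ := h2 (StretchAux.liftD i a) (StretchAux.liftD_ne i a)
      have hx : StretchAux.W2 W X i l a l' j := by
        unfold StretchAux.W2
        rw [if_pos hj]
        tauto
      fin_cases l'
      · exact Or.inl hx
      · exact Or.inr hx
    · have hj' : j.1 ∉ D := fun h => j.2 (Finset.mem_erase.2 ⟨hj, h⟩)
      rcases hcov.1 (StretchAux.liftD i a) ⟨j.1, hj'⟩ with h | h
      · exact Or.inl (by unfold StretchAux.W2; rw [if_neg hj]; exact ⟨hj', h⟩)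
      · exact Or.inr (by unfold StretchAux.W2; rw [if_neg hj]; exact ⟨hj', h⟩)
  · intro a b hab
    have hne : StretchAux.liftD i a ≠ StretchAux.liftD i b :=
      fun h => hab (by have h2 := congrArg Subtype.val h; exact Subtype.ext h2)
    obtain ⟨l1, l2, h⟩ := hcov.2 _ _ hne
    exact ⟨l1, l2, h⟩
  · exact ⟨⟨StretchAux.stretchEquiv i l, fun {v w} => StretchAux.fwd_adj W X i l h1 v w⟩⟩
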